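/- In Z_p, the ideal p^[r] generated by all p^j/j! with j ≥ r satisfies p^[ℓ] · p^[r] ⊆ p^[ℓ+r] for all nonnegative integers ℓ, r. -/

import Mathlib

/-!
STATEMENT 1. For `r : ℕ`, `pIdeal p r ⊆ ℤ_[p]` is the ideal generated by the elements
`p^j / j!` for `j ≥ r` (these lie in `ℤ_[p]` since `v_p(p^j/j!) ≥ 0`).  The theorem:
`p^[ℓ] · p^[r] ⊆ p^[ℓ+r]`.
-/

open Nat

noncomputable def pIdeal (p : ℕ) [Fact p.Prime] (r : ℕ) : Ideal ℤ_[p] :=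
  Ideal.span {x : ℤ_[p] | ∃ j : ℕ, r ≤ j ∧ (x : ℚ_[p]) = (p : ℚ_[p]) ^ j / (j ! : ℚ_[p])}

lemma padicValNat_factorial_le' (p n : ℕ) [hp : Fact p.Prime] :
    padicValNat p (n !) ≤ n := by
  have h := Nat.Prime.emultiplicity_factorial_le_div_pred hp.out n
  rw [← padicValNat_eq_emultiplicity (p := p) (Nat.factorial_ne_zero n)] at h
  have h' : padicValNat p (n !) ≤ n / (p - 1) := by exact_mod_cast h
  exact h'.trans (Nat.div_le_self _ _)

lemma norm_pow_div_factorial_le (p n : ℕ) [hp : Fact p.Prime] :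
    ‖((p : ℚ_[p]) ^ n / (n ! : ℚ_[p]))‖ ≤ 1 := by
  have hp1 : (p : ℚ_[p]) ≠ 0 := by
    exact_mod_cast Nat.cast_ne_zero.mpr hp.out.ne_zero
  have hf : ((n ! : ℕ) : ℚ_[p]) ≠ 0 := by
    exact_mod_cast Nat.cast_ne_zero.mpr (Nat.factorial_ne_zero n)
  have hx : (p : ℚ_[p]) ^ n / (n ! : ℚ_[p]) ≠ 0 :=
    div_ne_zero (pow_ne_zero _ hp1) hf
  have hv : ‖((n ! : ℕ) : ℚ_[p])‖ = (p : ℝ) ^ (-(padicValNat p (n !) : ℤ)) := by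
    rw [Padic.norm_eq_zpow_neg_valuation hf, Padic.valuation_natCast]
  have hp1R : (1 : ℝ) ≤ (p : ℝ) := by exact_mod_cast hp.out.one_le
  have hpR : (0 : ℝ) < (p : ℝ) := by exact_mod_cast hp.out.pos
  rw [norm_div, norm_pow, Padic.norm_p, hv]
  have : ((p : ℝ)⁻¹) ^ n / (p : ℝ) ^ (-(padicValNat p (n !) : ℤ))
      = (p : ℝ) ^ ((padicValNat p (n !) : ℤ) - n) := by
    rw [← zpow_natCast ((p : ℝ)⁻¹) n, ← zpow_neg_one, ← zpow_mul, div_eq_mul_inv,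
      ← zpow_neg, ← zpow_add₀ hpR.ne']
    ring_nf
  rw [this]
  calc (p : ℝ) ^ ((padicValNat p (n !) : ℤ) - n) ≤ (p : ℝ) ^ (0 : ℤ) := by
        apply zpow_le_zpow_right₀ hp1R
        have := padicValNat_factorial_le' p n
        omega
    _ = 1 := zpow_zero _

/-- The canonical element `p^n / n!` of `ℤ_[p]`. -/
noncomputable def padicPowDivFactorial (p : ℕ) [Fact p.Prime] (n : ℕ) : ℤ_[p] :=
  ⟨(p : ℚ_[p]) ^ n / (n ! : ℚ_[p]), norm_pow_div_factorial_le p n⟩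

lemma padicPowDivFactorial_mem (p : ℕ) [Fact p.Prime] {r n : ℕ} (h : r ≤ n) :
    padicPowDivFactorial p n ∈ pIdeal p r :=
  Ideal.subset_span ⟨n, h, rfl⟩

theorem stmt1 (p : ℕ) [Fact p.Prime] (l r : ℕ) :
    pIdeal p l * pIdeal p r ≤ pIdeal p (l + r) := by
  rw [pIdeal, pIdeal, Ideal.span_mul_span, Ideal.span_le]
  rintro z hz
  simp only [Set.mem_mul, Set.mem_setOf_eq] at hz
  obtain ⟨x, ⟨i, hi, hx⟩, y, ⟨j, hj, hy⟩, rfl⟩ := hz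
  have key : x * y = ((i + j).choose j : ℤ_[p]) * padicPowDivFactorial p (i + j) := by
    apply Subtype.ext
    push_cast [padicPowDivFactorial, hx, hy]
    have hfact : (((i + j).choose j : ℚ_[p]) * (i ! : ℚ_[p]) * (j ! : ℚ_[p]))
        = ((i + j)! : ℚ_[p]) := by
      exact_mod_cast congrArg (Nat.cast : ℕ → ℚ_[p])
        (Nat.add_choose_mul_factorial_mul_factorial i j)
    have hfi : (i ! : ℚ_[p]) ≠ 0 := by
      exact_mod_cast Nat.cast_ne_zero.mpr (Nat.factorial_ne_zero i)
    have hfj : (j ! : ℚ_[p]) ≠ 0 := by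
      exact_mod_cast Nat.cast_ne_zero.mpr (Nat.factorial_ne_zero j)
    have hfij : ((i + j)! : ℚ_[p]) ≠ 0 := by
      exact_mod_cast Nat.cast_ne_zero.mpr (Nat.factorial_ne_zero (i + j))
    change _ = ((i + j).choose j : ℚ_[p]) * ((p : ℚ_[p]) ^ (i + j) / ((i + j)! : ℚ_[p]))
    field_simp
    rw [← hfact, pow_add]
    ring
  rw [key]
  exact Ideal.mul_mem_left _ _ (padicPowDivFactorial_mem p (Nat.add_le_add hi hj))
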